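/- Let X be an m×n matrix and suppose D₁, E₁, D₂, E₂ are positive diagonal matrices with D₁·X·E₁ = D₂·X·E₂. Then E₁⁻¹·X⁺·D₁⁻¹ = E₂⁻¹·X⁺·D₂⁻¹. -/
import Mathlib


/-- `B` is the Moore–Penrose pseudoinverse of `A`. -/
def IsMP {m n : ℕ} (A : Matrix (Fin m) (Fin n) ℝ) (B : Matrix (Fin n) (Fin m) ℝ) : Prop :=
  A * B * A = A ∧ B * A * B = B ∧ (A * B).conjTranspose = A * B ∧ (B * A).conjTranspose = B * A

private lemma diag_mul_diag_eq {k : ℕ} (u v w : Fin k → ℝ) (h : ∀ i, u i * v i = w i) :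
    Matrix.diagonal u * Matrix.diagonal v = Matrix.diagonal w := by
  rw [Matrix.diagonal_mul_diagonal]
  exact congrArg Matrix.diagonal (funext h)

private lemma diag_mul_diag_one {k : ℕ} (u v : Fin k → ℝ) (h : ∀ i, u i * v i = 1) :
    Matrix.diagonal u * Matrix.diagonal v = 1 := by
  rw [← Matrix.diagonal_one]
  exact diag_mul_diag_eq u v _ h

theorem stmt_13 (m n : ℕ) (X : Matrix (Fin m) (Fin n) ℝ)
    (d₁ d₂ : Fin m → ℝ) (e₁ e₂ : Fin n → ℝ)
    (hd₁ : ∀ i, 0 < d₁ i) (hd₂ : ∀ i, 0 < d₂ i)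
    (he₁ : ∀ j, 0 < e₁ j) (he₂ : ∀ j, 0 < e₂ j)
    (hscale : Matrix.diagonal d₁ * X * Matrix.diagonal e₁ =
      Matrix.diagonal d₂ * X * Matrix.diagonal e₂)
    (B : Matrix (Fin n) (Fin m) ℝ) (hB : IsMP X B) :
    (Matrix.diagonal e₁)⁻¹ * B * (Matrix.diagonal d₁)⁻¹ =
      (Matrix.diagonal e₂)⁻¹ * B * (Matrix.diagonal d₂)⁻¹ := by
  obtain ⟨h1, h2, h3, h4⟩ := hB
  have hd₁' : ∀ i, d₁ i ≠ 0 := fun i => (hd₁ i).ne'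
  have hd₂' : ∀ i, d₂ i ≠ 0 := fun i => (hd₂ i).ne'
  have he₁' : ∀ j, e₁ j ≠ 0 := fun j => (he₁ j).ne'
  have he₂' : ∀ j, e₂ j ≠ 0 := fun j => (he₂ j).ne'
  set D : Matrix (Fin m) (Fin m) ℝ := Matrix.diagonal (fun i => d₁ i * (d₂ i)⁻¹) with hD
  set D' : Matrix (Fin m) (Fin m) ℝ := Matrix.diagonal (fun i => d₂ i * (d₁ i)⁻¹) with hD'
  set E : Matrix (Fin n) (Fin n) ℝ := Matrix.diagonal (fun j => e₁ j * (e₂ j)⁻¹) with hE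
  set E' : Matrix (Fin n) (Fin n) ℝ := Matrix.diagonal (fun j => e₂ j * (e₁ j)⁻¹) with hE'
  have hD'D : D' * D = 1 := by
    rw [hD, hD']; exact diag_mul_diag_one _ _ (fun i => by have := hd₁' i; have := hd₂' i; field_simp; try ring)
  have hEE' : E * E' = 1 := by
    rw [hE, hE']; exact diag_mul_diag_one _ _ (fun j => by have := he₁' j; have := he₂' j; field_simp; try ring)
  -- the rescaling identity: D * X * E = X
  have hX : D * X * E = X := by
    rw [hD, hE]
    ext i j
    have hs := congrFun (congrFun hscale i) j
    simp only [Matrix.mul_diagonal, Matrix.diagonal_mul] at hs ⊢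
    have h2i := hd₂' i
    have h2j := he₂' j
    field_simp
    linear_combination hs
  have hDX : D * X = X * E' := by
    calc D * X = D * X * (E * E') := by rw [hEE', Matrix.mul_one]
    _ = (D * X * E) * E' := by rw [Matrix.mul_assoc (D * X) E E']
    _ = X * E' := by rw [hX]
  have hXE : X * E = D' * X := by
    calc X * E = (D' * D) * (X * E) := by rw [hD'D, Matrix.one_mul]
    _ = D' * (D * X * E) := by simp only [Matrix.mul_assoc]
    _ = D' * X := by rw [hX]
  set P : Matrix (Fin m) (Fin m) ℝ := X * B with hP
  set Q : Matrix (Fin n) (Fin n) ℝ := B * X with hQ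
  have hPX : P * X = X := h1
  have hXQ : X * Q = X := by rw [hQ, ← Matrix.mul_assoc]; exact h1
  have hBP : B * P = B := by rw [hP, ← Matrix.mul_assoc]; exact h2
  have hQB : Q * B = B := h2
  have hDH : D.conjTranspose = D := by
    rw [hD, Matrix.diagonal_conjTranspose]
    congr 1
  have hEH : E.conjTranspose = E := by
    rw [hE, Matrix.diagonal_conjTranspose]
    congr 1
  -- D * P = X * (E' * B)
  have hDP : D * P = X * (E' * B) := by
    rw [hP, ← Matrix.mul_assoc, hDX, Matrix.mul_assoc]
  have hPDP : P * (D * P) = D * P := by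
    rw [hDP, ← Matrix.mul_assoc, hPX]
  -- transpose it to get commutation
  have hPDcomm : D * P = P * D := by
    have ht := congrArg Matrix.conjTranspose hPDP
    simp only [Matrix.conjTranspose_mul, hDH, h3] at ht
    calc D * P = P * (D * P) := hPDP.symm
    _ = P * D := by simpa only [Matrix.mul_assoc] using ht
  -- Q * E = B * (D' * X)
  have hQE : Q * E = B * (D' * X) := by
    rw [hQ, Matrix.mul_assoc, hXE]
  have hQEQ : (Q * E) * Q = Q * E := by
    rw [hQE, Matrix.mul_assoc, Matrix.mul_assoc, hXQ]
  have hQEcomm : E * Q = Q * E := by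
    have ht := congrArg Matrix.conjTranspose hQEQ
    simp only [Matrix.conjTranspose_mul, hEH, h4] at ht
    calc E * Q = Q * (E * Q) := ht.symm
    _ = Q * E := by simpa only [Matrix.mul_assoc] using hQEQ
  -- the key identity
  have key : E * B * D = B := by
    have s1 : B * D = Q * (E' * B) := by
      calc B * D = B * P * D := by rw [hBP]
      _ = B * (D * P) := by rw [Matrix.mul_assoc, hPDcomm]
      _ = B * (X * (E' * B)) := by rw [hDP]
      _ = Q * (E' * B) := by rw [hQ]; simp only [Matrix.mul_assoc]
    calc E * B * D = E * (B * D) := by rw [Matrix.mul_assoc]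
    _ = E * (Q * (E' * B)) := by rw [s1]
    _ = (E * Q) * (E' * B) := (Matrix.mul_assoc E Q (E' * B)).symm
    _ = (Q * E) * (E' * B) := by rw [hQEcomm]
    _ = Q * ((E * E') * B) := by simp only [Matrix.mul_assoc]
    _ = Q * B := by rw [hEE', Matrix.one_mul]
    _ = B := hQB
  -- compute the inverses of the diagonal matrices
  have hinvd₁ : (Matrix.diagonal d₁)⁻¹ = Matrix.diagonal (fun i => (d₁ i)⁻¹) :=
    Matrix.inv_eq_right_inv (diag_mul_diag_one _ _ (fun i => by have := hd₁' i; have := hd₂' i; field_simp; try ring))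
  have hinvd₂ : (Matrix.diagonal d₂)⁻¹ = Matrix.diagonal (fun i => (d₂ i)⁻¹) :=
    Matrix.inv_eq_right_inv (diag_mul_diag_one _ _ (fun i => by have := hd₁' i; have := hd₂' i; field_simp; try ring))
  have hinve₁ : (Matrix.diagonal e₁)⁻¹ = Matrix.diagonal (fun j => (e₁ j)⁻¹) :=
    Matrix.inv_eq_right_inv (diag_mul_diag_one _ _ (fun j => by have := he₁' j; have := he₂' j; field_simp; try ring))
  have hinve₂ : (Matrix.diagonal e₂)⁻¹ = Matrix.diagonal (fun j => (e₂ j)⁻¹) :=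
    Matrix.inv_eq_right_inv (diag_mul_diag_one _ _ (fun j => by have := he₁' j; have := he₂' j; field_simp; try ring))
  rw [hinvd₁, hinvd₂, hinve₁, hinve₂]
  have hl : Matrix.diagonal (fun j => (e₁ j)⁻¹) * E = Matrix.diagonal (fun j => (e₂ j)⁻¹) := by
    rw [hE]; exact diag_mul_diag_eq _ _ _ (fun j => by have := he₁' j; have := he₂' j; field_simp; try ring)
  have hr : D * Matrix.diagonal (fun i => (d₁ i)⁻¹) = Matrix.diagonal (fun i => (d₂ i)⁻¹) := by
    rw [hD]; exact diag_mul_diag_eq _ _ _ (fun i => by have := hd₁' i; have := hd₂' i; field_simp; try ring)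
  calc Matrix.diagonal (fun j => (e₁ j)⁻¹) * B * Matrix.diagonal (fun i => (d₁ i)⁻¹)
      = Matrix.diagonal (fun j => (e₁ j)⁻¹) * (E * B * D) *
          Matrix.diagonal (fun i => (d₁ i)⁻¹) := by rw [key]
    _ = (Matrix.diagonal (fun j => (e₁ j)⁻¹) * E) * B *
        (D * Matrix.diagonal (fun i => (d₁ i)⁻¹)) := by
        simp only [Matrix.mul_assoc]
    _ = Matrix.diagonal (fun j => (e₂ j)⁻¹) * B * Matrix.diagonal (fun i => (d₂ i)⁻¹) := by
        rw [hl, hr, Matrix.mul_assoc]
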